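/- For every graph G, the Feige–Kilian primal SDP value h_p(G) equals |E|/2 − d(G)/4, where h_p(G) = inf { ∑_{{i,j}∈E, i<j} (1 − Y_{ij})/2 : Y ∈ ℝ^{n×n} symmetric positive semidefinite, Y_{ii} = 1 for all i, and ∑_{i,j} Y_{ij} = 0 } and d(G) = sup { (P·A·P) • Y : Y ∈ ℝ^{n×n} symmetric positive semidefinite, tr(Y) = n, and (P·Y·P)_{ii} = 1 for every i }. -/

import Mathlib

open Matrix BigOperators Finset

noncomputable section

/-- Adjacency matrix of a graph on `Fin n`, with real entries. -/
def adjA {n : ℕ} (G : SimpleGraph (Fin n)) [DecidableRel G.Adj] :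
    Matrix (Fin n) (Fin n) ℝ :=
  Matrix.of fun i j => if G.Adj i j then (1 : ℝ) else 0

/-- A bisection vector: entries in `{+1, -1}` summing to zero. -/
def IsBisection {n : ℕ} (x : Fin n → ℝ) : Prop :=
  (∀ i, x i = 1 ∨ x i = -1) ∧ ∑ i, x i = 0

/-- Cut width of a `±1` vector: `∑_{{i,j}∈E} (1 - x_i x_j)/2`, written as a sum
over ordered pairs (each edge counted twice, hence the `/4`). -/
def cw {n : ℕ} (G : SimpleGraph (Fin n)) [DecidableRel G.Adj] (x : Fin n → ℝ) : ℝ :=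
  (∑ i, ∑ j, adjA G i j * (1 - x i * x j)) / 4

/-- Bisection width: minimum cut width over all bisection vectors. -/
def bw {n : ℕ} (G : SimpleGraph (Fin n)) [DecidableRel G.Adj] : ℝ :=
  sInf {c | ∃ x : Fin n → ℝ, IsBisection x ∧ cw G x = c}

/-- `λ_S(B)`: supremum of the Rayleigh quotient of `B` over nonzero vectors of
coordinate sum zero. -/
def lamS {n : ℕ} (B : Matrix (Fin n) (Fin n) ℝ) : ℝ :=
  sSup {r | ∃ x : Fin n → ℝ, x ≠ 0 ∧ ∑ i, x i = 0 ∧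
    r = (x ⬝ᵥ B.mulVec x) / (∑ i, (x i) ^ 2)}

/-- Sum of all entries of a matrix. -/
def msum {n : ℕ} (M : Matrix (Fin n) (Fin n) ℝ) : ℝ := ∑ i, ∑ j, M i j

/-- Boppana's function `g(G,d)`. -/
def gB {n : ℕ} (G : SimpleGraph (Fin n)) [DecidableRel G.Adj] (d : Fin n → ℝ) : ℝ :=
  (msum (adjA G + Matrix.diagonal d) - n * lamS (adjA G + Matrix.diagonal d)) / 4

/-- Boppana's lower bound `h(G) = sup_d g(G,d)`. -/
def hB {n : ℕ} (G : SimpleGraph (Fin n)) [DecidableRel G.Adj] : ℝ :=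
  sSup {r | ∃ d : Fin n → ℝ, r = gB G d}

/-- Number of edges of `G`. -/
def edgeCount {n : ℕ} (G : SimpleGraph (Fin n)) [DecidableRel G.Adj] : ℕ :=
  G.edgeFinset.card

/-- The all-ones matrix `J`. -/
def Jmat (n : ℕ) : Matrix (Fin n) (Fin n) ℝ := Matrix.of fun _ _ => (1 : ℝ)

/-- The projection matrix `P = I - J/n`. -/
def Pmat (n : ℕ) : Matrix (Fin n) (Fin n) ℝ := 1 - (n : ℝ)⁻¹ • Jmat n

/-- The dual SDP value `d(G)` for Boppana's optimization. -/
def dSDP {n : ℕ} (G : SimpleGraph (Fin n)) [DecidableRel G.Adj] : ℝ :=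
  sSup {r | ∃ Y : Matrix (Fin n) (Fin n) ℝ, Y.PosSemidef ∧
    Y.trace = (n : ℝ) ∧ (∀ i, (Pmat n * Y * Pmat n) i i = 1) ∧
    r = ∑ i, ∑ j, (Pmat n * adjA G * Pmat n) i j * Y i j}

/-- The Feige–Kilian primal SDP value `h_p(G)`. -/
def hP {n : ℕ} (G : SimpleGraph (Fin n)) [DecidableRel G.Adj] : ℝ :=
  sInf {r | ∃ Y : Matrix (Fin n) (Fin n) ℝ, Y.PosSemidef ∧
    (∀ i, Y i i = 1) ∧ (∑ i, ∑ j, Y i j) = 0 ∧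
    r = ∑ i, ∑ j, if i < j then adjA G i j * (1 - Y i j) / 2 else 0}

namespace FKaux

variable {n : ℕ}

lemma symm_of_herm {Y : Matrix (Fin n) (Fin n) ℝ} (hY : Y.IsHermitian) :
    ∀ i j, Y j i = Y i j := fun i j => by
  simpa using hY.apply i j

lemma transpose_of_herm {Y : Matrix (Fin n) (Fin n) ℝ} (hY : Y.IsHermitian) : Yᵀ = Y := by
  ext i j
  rw [Matrix.transpose_apply]
  exact symm_of_herm hY i j

lemma adjA_symm (G : SimpleGraph (Fin n)) [DecidableRel G.Adj] (i j : Fin n) :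
    adjA G j i = adjA G i j := by
  simp [adjA, G.adj_comm]

lemma adjA_diag (G : SimpleGraph (Fin n)) [DecidableRel G.Adj] (i : Fin n) :
    adjA G i i = 0 := by simp [adjA]

lemma adjA_nonneg (G : SimpleGraph (Fin n)) [DecidableRel G.Adj] (i j : Fin n) :
    0 ≤ adjA G i j := by
  simp only [adjA, Matrix.of_apply]; positivity

lemma adjA_sum (G : SimpleGraph (Fin n)) [DecidableRel G.Adj] :
    ∑ i, ∑ j, adjA G i j = 2 * (edgeCount G : ℝ) := by
  have h1 : ∀ i, ∑ j, adjA G i j = (G.degree i : ℝ) := by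
    intro i
    simpa [Matrix.mulVec, dotProduct, adjA, SimpleGraph.adjMatrix] using
      (G.adjMatrix_mulVec_const_apply (α := ℝ) (a := 1) (v := i))
  simp_rw [h1]
  rw [← Nat.cast_sum, SimpleGraph.sum_degrees_eq_twice_card_edges]
  push_cast
  rfl

lemma half_sum {f : Fin n → Fin n → ℝ} (hs : ∀ i j, f j i = f i j)
    (hd : ∀ i, f i i = 0) :
    ∑ i, ∑ j, (if i < j then f i j else 0) = (∑ i, ∑ j, f i j) / 2 := by
  have hpt : ∀ i j, f i j = (if i < j then f i j else 0) + (if j < i then f i j else 0) := by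
    intro i j
    rcases lt_trichotomy i j with h | h | h
    · simp [h, h.asymm]
    · subst h; simp [hd]
    · simp [h, h.asymm]
  have key : ∑ i, ∑ j, f i j
      = (∑ i, ∑ j, (if i < j then f i j else 0))
        + ∑ i, ∑ j, (if j < i then f i j else 0) := by
    simp_rw [← Finset.sum_add_distrib]
    exact Finset.sum_congr rfl fun i _ => Finset.sum_congr rfl fun j _ => hpt i j
  have hswap : ∑ i, ∑ j, (if j < i then f i j else 0)
      = ∑ i, ∑ j, (if i < j then f i j else 0) := by
    rw [Finset.sum_comm]
    exact Finset.sum_congr rfl fun i _ => Finset.sum_congr rfl fun j _ => by rw [hs]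
  rw [key, hswap]; ring

lemma frob (M N : Matrix (Fin n) (Fin n) ℝ) :
    ∑ i, ∑ j, M i j * N i j = (M * Nᵀ).trace := by
  simp [Matrix.trace, Matrix.mul_apply, Matrix.diag]

lemma Jmat_mul_Jmat : Jmat n * Jmat n = (n : ℝ) • Jmat n := by
  ext i j; simp [Jmat, Matrix.mul_apply]

lemma Jmat_transpose : (Jmat n)ᵀ = Jmat n := by
  ext i j; simp [Jmat]

lemma Pmat_transpose : (Pmat n)ᵀ = Pmat n := by
  rw [Pmat, Matrix.transpose_sub, Matrix.transpose_one, Matrix.transpose_smul, Jmat_transpose]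

lemma Pmat_conjTranspose : (Pmat n)ᴴ = Pmat n := by
  ext i j
  rw [Matrix.conjTranspose_apply, star_trivial]
  exact congrFun (congrFun (Pmat_transpose (n := n)) i) j

lemma Pmat_mul_Jmat (hn : (n : ℝ) ≠ 0) : Pmat n * Jmat n = 0 := by
  rw [Pmat, sub_mul, one_mul, smul_mul_assoc, Jmat_mul_Jmat, smul_smul,
    inv_mul_cancel₀ hn, one_smul, sub_self]

lemma Jmat_mul_Pmat (hn : (n : ℝ) ≠ 0) : Jmat n * Pmat n = 0 := by
  rw [Pmat, mul_sub, mul_one, mul_smul_comm, Jmat_mul_Jmat, smul_smul,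
    inv_mul_cancel₀ hn, one_smul, sub_self]

lemma Pmat_idem (hn : (n : ℝ) ≠ 0) : Pmat n * Pmat n = Pmat n := by
  nth_rewrite 1 [Pmat]
  rw [sub_mul, one_mul, smul_mul_assoc, Jmat_mul_Pmat hn, smul_zero, sub_zero]

lemma Pmat_posSemidef (hn : (n : ℝ) ≠ 0) : (Pmat n).PosSemidef := by
  have h := Matrix.posSemidef_conjTranspose_mul_self (Pmat n)
  rwa [Pmat_conjTranspose, Pmat_idem hn] at h

lemma posSemidef_smul {M : Matrix (Fin n) (Fin n) ℝ} (hM : M.PosSemidef) {c : ℝ}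
    (hc : 0 ≤ c) : (c • M).PosSemidef := by
  rw [Matrix.posSemidef_iff_dotProduct_mulVec]
  constructor
  · have h1 := hM.1
    unfold Matrix.IsHermitian at h1 ⊢
    ext i j
    simp [Matrix.conjTranspose_apply, symm_of_herm hM.1 j i]
  · intro x
    have := hM.dotProduct_mulVec_nonneg x
    simp only [Matrix.smul_mulVec, dotProduct_smul, smul_eq_mul]
    exact mul_nonneg hc this

end FKaux

namespace FKaux

variable {n : ℕ}

lemma frob_PAP (A Y : Matrix (Fin n) (Fin n) ℝ) (hY : Yᵀ = Y) :
    ∑ i, ∑ j, (Pmat n * A * Pmat n) i j * Y i j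
      = ∑ i, ∑ j, A i j * (Pmat n * Y * Pmat n) i j := by
  have h1 : (Pmat n * Y * Pmat n)ᵀ = Pmat n * Y * Pmat n := by
    rw [Matrix.transpose_mul, Matrix.transpose_mul, Pmat_transpose, hY, ← mul_assoc]
  rw [frob, frob, hY, h1]
  calc ((Pmat n * A * Pmat n) * Y).trace
      = ((Pmat n * A) * (Pmat n * Y)).trace := by rw [mul_assoc]
    _ = ((Pmat n * Y) * (Pmat n * A)).trace := Matrix.trace_mul_comm _ _
    _ = ((Pmat n * Y * Pmat n) * A).trace := by rw [← mul_assoc]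
    _ = (A * (Pmat n * Y * Pmat n)).trace := Matrix.trace_mul_comm _ _

lemma objective_eq (G : SimpleGraph (Fin n)) [DecidableRel G.Adj]
    {Y : Matrix (Fin n) (Fin n) ℝ} (hsymm : ∀ i j, Y j i = Y i j) :
    (∑ i, ∑ j, if i < j then adjA G i j * (1 - Y i j) / 2 else 0)
      = (edgeCount G : ℝ) / 2 - (∑ i, ∑ j, adjA G i j * Y i j) / 4 := by
  rw [half_sum (f := fun i j => adjA G i j * (1 - Y i j) / 2)
      (fun i j => by
        show adjA G j i * (1 - Y j i) / 2 = adjA G i j * (1 - Y i j) / 2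
        rw [adjA_symm, hsymm])
      (fun i => by
        show adjA G i i * (1 - Y i i) / 2 = 0
        rw [adjA_diag]; ring)]
  have hpt : ∀ i j : Fin n, adjA G i j * (1 - Y i j) / 2
      = adjA G i j / 2 - adjA G i j * Y i j / 2 := fun i j => by ring
  simp_rw [hpt, Finset.sum_sub_distrib, ← Finset.sum_div]
  rw [adjA_sum]
  ring

lemma sum_rows_zero {Y : Matrix (Fin n) (Fin n) ℝ} (hY : Y.PosSemidef)
    (hsum : ∑ i, ∑ j, Y i j = 0) : Y *ᵥ (fun _ => (1 : ℝ)) = 0 := by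
  apply (hY.dotProduct_mulVec_zero_iff (fun _ => 1)).mp
  simpa [dotProduct, Matrix.mulVec] using hsum

lemma mul_Jmat_zero {Y : Matrix (Fin n) (Fin n) ℝ}
    (h : Y *ᵥ (fun _ => (1 : ℝ)) = 0) : Y * Jmat n = 0 := by
  ext i j
  have h2 := congrFun h i
  simp only [Matrix.mulVec, dotProduct, mul_one, Pi.zero_apply] at h2
  simp [Matrix.mul_apply, Jmat, h2]

lemma Jmat_mul_zero {Y : Matrix (Fin n) (Fin n) ℝ} (hsymm : ∀ i j, Y j i = Y i j)
    (h : Y *ᵥ (fun _ => (1 : ℝ)) = 0) : Jmat n * Y = 0 := by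
  ext i j
  have h2 := congrFun h j
  simp only [Matrix.mulVec, dotProduct, mul_one, Pi.zero_apply] at h2
  simp only [Matrix.mul_apply, Jmat, Matrix.of_apply, one_mul, Matrix.zero_apply]
  rw [Finset.sum_congr rfl fun k _ => hsymm j k]
  exact h2

lemma PYP_eq {Y : Matrix (Fin n) (Fin n) ℝ} (hn : (n : ℝ) ≠ 0)
    (hsymm : ∀ i j, Y j i = Y i j) (h1 : Y *ᵥ (fun _ => (1 : ℝ)) = 0) :
    Pmat n * Y * Pmat n = Y := by
  have hYJ := mul_Jmat_zero h1
  have hJY := Jmat_mul_zero hsymm h1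
  rw [Pmat, sub_mul, one_mul, smul_mul_assoc, hJY, smul_zero, sub_zero,
    mul_sub, mul_one, mul_smul_comm, hYJ, smul_zero, sub_zero]

lemma entry_le_one {Y : Matrix (Fin n) (Fin n) ℝ} (hY : Y.PosSemidef)
    (hdiag : ∀ i, Y i i = 1) (i j : Fin n) : Y i j ≤ 1 := by
  rcases eq_or_ne i j with rfl | hij
  · rw [hdiag]
  · have h := hY.dotProduct_mulVec_nonneg (Pi.single i 1 - Pi.single j 1)
    have hs := symm_of_herm hY.1 i j
    have hmv : Y *ᵥ (Pi.single i 1 - Pi.single j 1) = fun a => Y a i - Y a j := by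
      ext a
      simp [Matrix.mulVec, dotProduct, Pi.single_apply, mul_sub, mul_ite,
        Finset.sum_sub_distrib]
    rw [hmv] at h
    simp only [star_sub, star_trivial, dotProduct, Pi.sub_apply, Pi.single_apply,
      sub_mul, ite_mul, one_mul, zero_mul, Finset.sum_sub_distrib,
      Finset.sum_ite_eq, Finset.sum_ite_eq', Finset.mem_univ, if_true] at h
    have hii := hdiag i
    have hjj := hdiag j
    linarith [h]

end FKaux

open FKaux

/-- `h_p(G) = |E|/2 - d(G)/4`. -/
theorem feige_kilian_primal_eq_boppana_dual {n : ℕ} (hn2 : 2 ≤ n) (hne : Even n)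
    (G : SimpleGraph (Fin n)) [DecidableRel G.Adj] :
    hP G = (edgeCount G : ℝ) / 2 - dSDP G / 4 := by
  classical
  have hnR : (2 : ℝ) ≤ (n : ℝ) := by exact_mod_cast hn2
  have hn0 : (n : ℝ) ≠ 0 := by linarith
  set c : ℝ := (edgeCount G : ℝ) / 2 with hc
  set S : Set ℝ := {r | ∃ Y : Matrix (Fin n) (Fin n) ℝ, Y.PosSemidef ∧
    Y.trace = (n : ℝ) ∧ (∀ i, (Pmat n * Y * Pmat n) i i = 1) ∧
    r = ∑ i, ∑ j, (Pmat n * adjA G * Pmat n) i j * Y i j} with hSdef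
  set T : Set ℝ := {r | ∃ Y : Matrix (Fin n) (Fin n) ℝ, Y.PosSemidef ∧
    (∀ i, Y i i = 1) ∧ (∑ i, ∑ j, Y i j) = 0 ∧
    r = ∑ i, ∑ j, if i < j then adjA G i j * (1 - Y i j) / 2 else 0} with hTdef
  have hPd : hP G = sInf T := rfl
  have hDd : dSDP G = sSup S := rfl
  -- From hP-feasible to dSDP-feasible
  have hTS : ∀ r ∈ T, ∃ s ∈ S, r = c - s / 4 := by
    rintro r ⟨Y, hpsd, hdiag, hsum0, rfl⟩
    have hsymm := symm_of_herm hpsd.1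
    have h1 : Y *ᵥ (fun _ => (1 : ℝ)) = 0 := sum_rows_zero hpsd hsum0
    have hPYP : Pmat n * Y * Pmat n = Y := PYP_eq hn0 hsymm h1
    refine ⟨∑ i, ∑ j, (Pmat n * adjA G * Pmat n) i j * Y i j,
      ⟨Y, hpsd, ?_, ?_, rfl⟩, ?_⟩
    · simp [Matrix.trace, Matrix.diag, hdiag, Finset.card_univ]
    · intro i; rw [hPYP]; exact hdiag i
    · rw [objective_eq G hsymm, frob_PAP (adjA G) Y (transpose_of_herm hpsd.1), hPYP, hc]
  -- From dSDP-feasible to hP-feasible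
  have hST : ∀ s ∈ S, (c - s / 4) ∈ T := by
    rintro s ⟨Y, hpsd, htr, hdiagZ, rfl⟩
    have hZpsd : (Pmat n * Y * Pmat n).PosSemidef := by
      have h := hpsd.mul_mul_conjTranspose_same (Pmat n)
      rwa [Pmat_conjTranspose] at h
    have hZsymm := symm_of_herm hZpsd.1
    have hZJ : (Pmat n * Y * Pmat n) * Jmat n = 0 := by
      rw [mul_assoc (Pmat n * Y), Pmat_mul_Jmat hn0, mul_zero]
    have hZsum : ∑ i, ∑ j, (Pmat n * Y * Pmat n) i j = 0 := by
      have hrow : ∀ i, ∑ j, (Pmat n * Y * Pmat n) i j = 0 := fun i => by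
        have h2 := congrFun (congrFun hZJ i) i
        simpa [Matrix.mul_apply, Jmat] using h2
      simp [hrow]
    refine ⟨Pmat n * Y * Pmat n, hZpsd, hdiagZ, hZsum, ?_⟩
    rw [objective_eq G hZsymm, frob_PAP (adjA G) Y (transpose_of_herm hpsd.1), hc]
  -- nonemptiness of T
  have hTne : T.Nonempty := by
    set Y0 : Matrix (Fin n) (Fin n) ℝ := ((n : ℝ) / ((n : ℝ) - 1)) • Pmat n with hY0
    have hcge : 0 ≤ (n : ℝ) / ((n : ℝ) - 1) := by
      apply div_nonneg <;> linarith
    have hrow : ∀ i, ∑ j, Pmat n i j = 0 := fun i => by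
      have h2 := congrFun (congrFun (Pmat_mul_Jmat hn0) i) i
      simpa [Matrix.mul_apply, Jmat] using h2
    refine ⟨_, Y0, posSemidef_smul (Pmat_posSemidef hn0) hcge, ?_, ?_, rfl⟩
    · intro i
      have hPii : Pmat n i i = 1 - (n : ℝ)⁻¹ := by
        simp [Pmat, Jmat, Matrix.one_apply]
      have hne1 : (n : ℝ) - 1 ≠ 0 := by linarith
      have h1 : (1 : ℝ) - (n : ℝ)⁻¹ = ((n : ℝ) - 1) / (n : ℝ) := by field_simp
      rw [hY0, Matrix.smul_apply, hPii, smul_eq_mul, h1, div_mul_div_comm,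
        mul_comm ((n : ℝ) - 1) (n : ℝ), div_self (mul_ne_zero hn0 hne1)]
    · rw [hY0]
      simp only [Matrix.smul_apply, smul_eq_mul, ← Finset.mul_sum]
      simp [hrow]
  -- lower bound 0 for members of T
  have hT0 : ∀ t ∈ T, (0 : ℝ) ≤ t := by
    rintro t ⟨Y, hpsd, hdiag, hsum0, rfl⟩
    apply Finset.sum_nonneg; intro i _
    apply Finset.sum_nonneg; intro j _
    split
    · have h1 := entry_le_one hpsd hdiag i j
      have h2 := adjA_nonneg G i j
      have : 0 ≤ 1 - Y i j := by linarith
      positivity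
    · exact le_refl 0
  have hSne : S.Nonempty := by
    obtain ⟨t, ht⟩ := hTne
    obtain ⟨s, hs, _⟩ := hTS t ht
    exact ⟨s, hs⟩
  have hTbdd : BddBelow T := ⟨0, fun t ht => hT0 t ht⟩
  have hSbdd : BddAbove S := by
    refine ⟨4 * c, fun s hs => ?_⟩
    have h1 := hT0 _ (hST s hs)
    linarith
  rw [hPd, hDd]
  apply le_antisymm
  · have h1 : sSup S ≤ 4 * (c - sInf T) := by
      apply csSup_le hSne
      intro s hs
      have h2 := csInf_le hTbdd (hST s hs)
      linarith
    linarith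
  · apply le_csInf hTne
    intro t ht
    obtain ⟨s, hs, rfl⟩ := hTS t ht
    have h2 := le_csSup hSbdd hs
    linarith
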